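/- Let ρ be a symmetric operator on an n-dimensional real inner product space with trace S, and let 1 ≤ k < n. If Sch_{(k−1)/(k(n−1))} := ρ − ((k−1)/(k(n−1)))·S·id is positive definite, then Ein_k = S·id − k·ρ is positive definite. -/

import Mathlib

open RealInnerProductSpace

lemma trace_eq_sum_inner' {E : Type*} [NormedAddCommGroup E] [InnerProductSpace ℝ E]
    [FiniteDimensional ℝ E] {ι : Type*} [Fintype ι] [DecidableEq ι]
    (b : OrthonormalBasis ι ℝ E) (A : E →ₗ[ℝ] E) :
    LinearMap.trace ℝ E A = ∑ i, ⟪A (b i), b i⟫ := by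
  rw [LinearMap.trace_eq_matrix_trace ℝ b.toBasis A, Matrix.trace]
  congr 1
  ext i
  rw [Matrix.diag_apply, LinearMap.toMatrix_apply, b.coe_toBasis, b.coe_toBasis_repr_apply,
    b.repr_apply_apply, real_inner_comm]

lemma inner_lt_trace {E : Type*} [NormedAddCommGroup E] [InnerProductSpace ℝ E]
    [FiniteDimensional ℝ E] {n : ℕ} (hn : Module.finrank ℝ E = n) (hn2 : 2 ≤ n)
    (A : E →ₗ[ℝ] E) (hpos : ∀ v : E, v ≠ 0 → 0 < ⟪A v, v⟫)
    (v : E) (hv : v ≠ 0) :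
    ⟪A v, v⟫ < LinearMap.trace ℝ E A * ‖v‖ ^ 2 := by
  haveI : NeZero n := ⟨by omega⟩
  -- reduce to unit vector
  have hvn : ‖v‖ ≠ 0 := norm_ne_zero_iff.mpr hv
  set u : E := ‖v‖⁻¹ • v with hu
  have hun : ‖u‖ = 1 := by
    rw [hu, norm_smul, norm_inv, norm_norm, inv_mul_cancel₀ hvn]
  have key : ⟪A u, u⟫ < LinearMap.trace ℝ E A := by
    have hcard : Module.finrank ℝ E = Fintype.card (Fin n) := by simp [hn]
    have horth : Orthonormal ℝ (({0} : Set (Fin n)).restrict (fun _ => u)) := by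
      constructor
      · intro i; exact hun
      · rintro ⟨i, hi⟩ ⟨j, hj⟩ hij
        simp only [Set.mem_singleton_iff] at hi hj
        exact absurd (Subtype.ext (hi.trans hj.symm)) hij
    obtain ⟨b, hb⟩ := horth.exists_orthonormalBasis_extension_of_card_eq hcard
    have hb0 : b 0 = u := hb 0 rfl
    rw [trace_eq_sum_inner' b A]
    have h0 : (0 : Fin n) ∈ Finset.univ := Finset.mem_univ _
    rw [← Finset.sum_erase_add _ _ h0, hb0]
    have : 0 < ∑ i ∈ Finset.univ.erase 0, ⟪A (b i), b i⟫ := by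
      apply Finset.sum_pos
      · intro i _
        exact hpos _ (b.toBasis.ne_zero i)
      · refine ⟨⟨1, by omega⟩, Finset.mem_erase.mpr ⟨?_, Finset.mem_univ _⟩⟩
        simp [Fin.ext_iff]
    linarith
  have hAu : ⟪A u, u⟫ = (‖v‖ ^ 2)⁻¹ * ⟪A v, v⟫ := by
    rw [hu, map_smul, inner_smul_left, inner_smul_right, conj_trivial, sq]
    rw [mul_inv]
    ring
  rw [hAu] at key
  have h2 : (0:ℝ) < ‖v‖ ^ 2 := by positivity
  calc ⟪A v, v⟫ = ((‖v‖ ^ 2)⁻¹ * ⟪A v, v⟫) * ‖v‖ ^ 2 := by field_simp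
    _ < LinearMap.trace ℝ E A * ‖v‖ ^ 2 := by
        exact mul_lt_mul_of_pos_right key h2

/-- For `1 ≤ k < n` (`n ≥ 2`), if
`Sch_{(k-1)/(k(n-1))} = ρ - ((k-1)/(k(n-1)))·S•id` is positive definite then
`Ein_k = S•id - k•ρ` is positive definite. -/
theorem stmt_15 {E : Type*} [NormedAddCommGroup E] [InnerProductSpace ℝ E]
    [FiniteDimensional ℝ E] {n : ℕ} (hn : Module.finrank ℝ E = n) (hn2 : 2 ≤ n)
    (ρ : E →ₗ[ℝ] E) (hρ : ρ.IsSymmetric) (S : ℝ) (hS : S = LinearMap.trace ℝ E ρ)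
    {k : ℝ} (hk1 : 1 ≤ k) (hk2 : k < n)
    (hpos : ∀ v : E, v ≠ 0 →
      0 < ⟪(ρ - ((k - 1) / (k * ((n : ℝ) - 1)) * S) •
        (LinearMap.id : E →ₗ[ℝ] E)) v, v⟫) :
    ∀ v : E, v ≠ 0 →
      0 < ⟪(S • (LinearMap.id : E →ₗ[ℝ] E) - k • ρ) v, v⟫ := by
  intro v hv
  set c : ℝ := (k - 1) / (k * ((n : ℝ) - 1)) with hc
  set A : E →ₗ[ℝ] E := ρ - (c * S) • LinearMap.id with hA
  have hk0 : (0:ℝ) < k := by linarith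
  have hn1 : (1:ℝ) < n := by
    have : (2:ℝ) ≤ n := by exact_mod_cast hn2
    linarith
  have hAv := inner_lt_trace hn hn2 A hpos v hv
  have htr : LinearMap.trace ℝ E A = S - c * S * n := by
    rw [hA, map_sub, map_smul, LinearMap.trace_id, hn, hS, smul_eq_mul]
  have hAv' : ⟪A v, v⟫ = ⟪ρ v, v⟫ - c * S * ‖v‖ ^ 2 := by
    rw [hA]
    simp only [LinearMap.sub_apply, LinearMap.smul_apply, LinearMap.id_apply,
      inner_sub_left, real_inner_smul_left, real_inner_self_eq_norm_sq]
  rw [hAv', htr] at hAv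
  have hk' : k ≠ 0 := ne_of_gt hk0
  have hn' : (n : ℝ) - 1 ≠ 0 := by linarith
  have hkc : k * (1 - c * n + c) = 1 := by
    rw [hc]
    field_simp
    ring
  have hgoal : ⟪(S • (LinearMap.id : E →ₗ[ℝ] E) - k • ρ) v, v⟫
      = S * ‖v‖ ^ 2 - k * ⟪ρ v, v⟫ := by
    simp only [LinearMap.sub_apply, LinearMap.smul_apply, LinearMap.id_apply,
      inner_sub_left, real_inner_smul_left, real_inner_self_eq_norm_sq]
  rw [hgoal]
  have h3 : k * ((S - c * S * (n:ℝ)) * ‖v‖ ^ 2) + k * (c * S * ‖v‖ ^ 2)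
      = (k * (1 - c * (n:ℝ) + c)) * (S * ‖v‖ ^ 2) := by ring
  rw [hkc, one_mul] at h3
  nlinarith [mul_lt_mul_of_pos_left hAv hk0, h3]
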